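/- Let x_i, y_i ∈ ℝ^m (i = 1,2,3) be such that x_i and y_i are linearly independent for each i, and set A := x_1⊗x_2⊗y_3 + x_1⊗y_2⊗x_3 + y_1⊗x_2⊗x_3 ∈ ℝ^{m×m×m}. Then rank(A) = 3. Conversely, if for some i the pair x_i, y_i is linearly dependent (and A ≠ 0), then rank(A) ≤ 2; i.e., rank(A) = 3 if and only if x_i, y_i are linearly independent for i = 1,2,3. -/

import Mathlib

/-- The rank of a 3-tensor `A ∈ ℝ^{l×m×n}`: the least `r` such that `A` is a sum
of `r` scaled outer products `λ_α x_α ⊗ y_α ⊗ z_α`. -/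
noncomputable def tensorRank {l m n : ℕ} (A : Fin l → Fin m → Fin n → ℝ) : ℕ :=
  sInf {r : ℕ | ∃ (lam : Fin r → ℝ) (x : Fin r → Fin l → ℝ)
    (y : Fin r → Fin m → ℝ) (z : Fin r → Fin n → ℝ),
    ∀ i j k, A i j k = ∑ α, lam α * (x α i * y α j * z α k)}

/-- pointwise version of pair linear independence -/
lemma pair_zero {m : ℕ} {u v : Fin m → ℝ} (h : LinearIndependent ℝ ![u, v])
    {a b : ℝ} (hab : ∀ j, a * u j + b * v j = 0) : a = 0 ∧ b = 0 := by
  refine LinearIndependent.pair_iff.mp h a b ?_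
  funext j
  simpa [Pi.smul_apply, smul_eq_mul] using hab j

lemma pair_fst_ne {m : ℕ} {u v : Fin m → ℝ} (h : LinearIndependent ℝ ![u, v]) :
    ∃ j, u j ≠ 0 := by
  by_contra hu
  push_neg at hu
  have : (1 : ℝ) = 0 ∧ (0 : ℝ) = 0 := pair_zero h (by intro j; simp [hu j])
  exact one_ne_zero this.1

/-- existence of a dual functional (via dot products) -/
lemma dual_exists {m : ℕ} {u v : Fin m → ℝ} (h : LinearIndependent ℝ ![u, v]) :
    ∃ c : Fin m → ℝ, (∑ k, c k * u k) = 1 ∧ (∑ k, c k * v k) = 0 := by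
  classical
  have hv : ∃ k, v k ≠ 0 := by
    by_contra hv
    push_neg at hv
    have : (0 : ℝ) = 0 ∧ (1 : ℝ) = 0 := pair_zero h (by intro j; simp [hv j])
    exact one_ne_zero this.2
  -- w := u - (u·v / v·v) v  is orthogonal to v and has w·u = w·w > 0
  set dvv : ℝ := ∑ k, v k * v k with hdvv
  have hdvvpos : 0 < dvv := by
    obtain ⟨k0, hk0⟩ := hv
    have : ∀ k ∈ Finset.univ, (0:ℝ) ≤ v k * v k := fun k _ => mul_self_nonneg _
    have h1 : (0:ℝ) < v k0 * v k0 := mul_self_pos.mpr hk0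
    exact Finset.sum_pos' this ⟨k0, Finset.mem_univ _, h1⟩
  set s : ℝ := (∑ k, u k * v k) / dvv with hs
  set w : Fin m → ℝ := fun k => u k - s * v k with hw
  have hwv : (∑ k, w k * v k) = 0 := by
    have : (∑ k, w k * v k) = (∑ k, u k * v k) - s * dvv := by
      simp only [hw, sub_mul, Finset.sum_sub_distrib, hdvv, Finset.mul_sum]
      ring_nf
    rw [this, hs]
    field_simp
    ring
  have hwu : (∑ k, w k * u k) = ∑ k, w k * w k := by
    have : ∀ k, w k * u k = w k * w k + s * (w k * v k) := by
      intro k; simp only [hw]; ring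
    rw [Finset.sum_congr rfl fun k _ => this k, Finset.sum_add_distrib, ← Finset.mul_sum, hwv]
    ring
  have hww : 0 < ∑ k, w k * w k := by
    rcases lt_or_eq_of_le (Finset.sum_nonneg (fun k (_ : k ∈ Finset.univ) => mul_self_nonneg (w k))) with hlt | heq
    · exact hlt
    · exfalso
      have hz : ∀ k ∈ Finset.univ, w k * w k = 0 := by
        intro k _
        have := (Finset.sum_eq_zero_iff_of_nonneg
          (fun k (_ : k ∈ Finset.univ) => mul_self_nonneg (w k))).mp heq.symm
        exact this k (Finset.mem_univ k)
      have hwz : ∀ k, w k = 0 := fun k =>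
        mul_self_eq_zero.mp (hz k (Finset.mem_univ k))
      -- then u = s • v, contradicting independence
      have : ∀ j, (1:ℝ) * u j + (-s) * v j = 0 := by
        intro j
        have := hwz j
        simp only [hw] at this
        linarith
      have := pair_zero h this
      exact one_ne_zero this.1
  refine ⟨fun k => (∑ k, w k * w k)⁻¹ * w k, ?_, ?_⟩
  · rw [show (∑ k, (∑ k, w k * w k)⁻¹ * w k * u k)
        = (∑ k, w k * w k)⁻¹ * ∑ k, w k * u k by
      rw [Finset.mul_sum]; exact Finset.sum_congr rfl fun k _ => by ring]
    rw [hwu]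
    exact inv_mul_cancel₀ hww.ne'
  · rw [show (∑ k, (∑ k, w k * w k)⁻¹ * w k * v k)
        = (∑ k, w k * w k)⁻¹ * ∑ k, w k * v k by
      rw [Finset.mul_sum]; exact Finset.sum_congr rfl fun k _ => by ring]
    rw [hwv]
    ring

lemma pair_swap {m : ℕ} {u v : Fin m → ℝ} (h : LinearIndependent ℝ ![u, v]) :
    LinearIndependent ℝ ![v, u] := by
  rw [LinearIndependent.pair_iff] at h ⊢
  intro s t hst
  have := h t s (by rw [← hst]; abel)
  exact ⟨this.2, this.1⟩

/-- A rank-one matrix in the pencil `s·(x₀⊗x₁) + t·(x₀⊗y₁ + y₀⊗x₁)` forces `t = 0`. -/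
lemma pencil_rank_one {m : ℕ} {x0 y0 x1 y1 U V : Fin m → ℝ}
    (h0 : LinearIndependent ℝ ![x0, y0]) (h1 : LinearIndependent ℝ ![x1, y1])
    {s t : ℝ}
    (hUV : ∀ i j, U i * V j = s * (x0 i * x1 j) + t * (x0 i * y1 j + y0 i * x1 j)) :
    t = 0 := by
  obtain ⟨c, hc1, hc2⟩ := dual_exists h0
  obtain ⟨c', hc'1, hc'2⟩ := dual_exists (pair_swap h0)
  -- contract over i
  set f : ℝ := ∑ i, c i * U i with hf
  set g : ℝ := ∑ i, c' i * U i with hg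
  have hfV : ∀ j, f * V j = s * x1 j + t * y1 j := by
    intro j
    have : ∀ i, c i * U i * V j
        = s * x1 j * (c i * x0 i) + t * y1 j * (c i * x0 i) + t * x1 j * (c i * y0 i) := by
      intro i; rw [mul_assoc, hUV i j]; ring
    have hsum : (∑ i, c i * U i * V j)
        = s * x1 j * (∑ i, c i * x0 i) + t * y1 j * (∑ i, c i * x0 i)
          + t * x1 j * (∑ i, c i * y0 i) := by
      rw [Finset.sum_congr rfl fun i _ => this i, Finset.sum_add_distrib,
        Finset.sum_add_distrib, ← Finset.mul_sum, ← Finset.mul_sum, ← Finset.mul_sum]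
    have hLHS : (∑ i, c i * U i * V j) = f * V j := by
      rw [hf, Finset.sum_mul]
    rw [← hLHS, hsum, hc1, hc2]
    ring
  have hgV : ∀ j, g * V j = t * x1 j := by
    intro j
    have : ∀ i, c' i * U i * V j
        = s * x1 j * (c' i * x0 i) + t * y1 j * (c' i * x0 i) + t * x1 j * (c' i * y0 i) := by
      intro i; rw [mul_assoc, hUV i j]; ring
    have hsum : (∑ i, c' i * U i * V j)
        = s * x1 j * (∑ i, c' i * x0 i) + t * y1 j * (∑ i, c' i * x0 i)
          + t * x1 j * (∑ i, c' i * y0 i) := by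
      rw [Finset.sum_congr rfl fun i _ => this i, Finset.sum_add_distrib,
        Finset.sum_add_distrib, ← Finset.mul_sum, ← Finset.mul_sum, ← Finset.mul_sum]
    have hLHS : (∑ i, c' i * U i * V j) = g * V j := by
      rw [hg, Finset.sum_mul]
    rw [← hLHS, hsum, hc'2, hc'1]
    ring
  by_contra ht
  have hgne : g ≠ 0 := by
    intro hg0
    obtain ⟨j0, hj0⟩ := pair_fst_ne h1
    have hcontr := hgV j0
    rw [hg0, zero_mul] at hcontr
    exact hj0 ((mul_eq_zero.mp hcontr.symm).resolve_left ht)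
  have key : ∀ j, (g * s - f * t) * x1 j + (g * t) * y1 j = 0 := by
    intro j
    have h1' := hfV j
    have h2' := hgV j
    have : g * (f * V j) = f * (g * V j) := by ring
    rw [h1', h2'] at this
    linear_combination this
  have := pair_zero h1 key
  exact hgne ((mul_eq_zero.mp this.2).resolve_right ht)

set_option maxHeartbeats 1000000 in
/-- no rank ≤ 2 decomposition when all pairs are independent -/
lemma no_two {m : ℕ} (x y : Fin 3 → Fin m → ℝ)
    (A : Fin m → Fin m → Fin m → ℝ)
    (hA : ∀ i j k, A i j k
      = x 0 i * x 1 j * y 2 k + x 0 i * y 1 j * x 2 k + y 0 i * x 1 j * x 2 k)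
    (hli : ∀ i, LinearIndependent ℝ ![x i, y i]) :
    ¬ ∃ (lam : Fin 2 → ℝ) (X : Fin 2 → Fin m → ℝ)
      (Y : Fin 2 → Fin m → ℝ) (Z : Fin 2 → Fin m → ℝ),
      ∀ i j k, A i j k = ∑ α, lam α * (X α i * Y α j * Z α k) := by
  rintro ⟨lam, X, Y, Z, hrep⟩
  obtain ⟨c, hc1, hc2⟩ := dual_exists (pair_swap (hli 2))   -- c·y2 = 1, c·x2 = 0
  obtain ⟨c', hc'1, hc'2⟩ := dual_exists (hli 2)            -- c'·x2 = 1, c'·y2 = 0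
  -- contraction of A over k with a functional e
  have hcontract : ∀ (e : Fin m → ℝ) (i j : Fin m),
      (∑ k, e k * A i j k)
        = x 0 i * x 1 j * (∑ k, e k * y 2 k)
          + (x 0 i * y 1 j + y 0 i * x 1 j) * (∑ k, e k * x 2 k) := by
    intro e i j
    have : ∀ k, e k * A i j k
        = x 0 i * x 1 j * (e k * y 2 k)
          + (x 0 i * y 1 j + y 0 i * x 1 j) * (e k * x 2 k) := by
      intro k; rw [hA]; ring
    rw [Finset.sum_congr rfl fun k _ => this k, Finset.sum_add_distrib,
      ← Finset.mul_sum, ← Finset.mul_sum]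
  have hcontract' : ∀ (e : Fin m → ℝ) (i j : Fin m),
      (∑ k, e k * A i j k)
        = (lam 0 * ∑ k, e k * Z 0 k) * (X 0 i * Y 0 j)
          + (lam 1 * ∑ k, e k * Z 1 k) * (X 1 i * Y 1 j) := by
    intro e i j
    have : ∀ k, e k * A i j k
        = lam 0 * (X 0 i * Y 0 j) * (e k * Z 0 k)
          + lam 1 * (X 1 i * Y 1 j) * (e k * Z 1 k) := by
      intro k; rw [hrep, Fin.sum_univ_two]; ring
    rw [Finset.sum_congr rfl fun k _ => this k, Finset.sum_add_distrib,
      ← Finset.mul_sum, ← Finset.mul_sum]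
    ring
  set μ0 : ℝ := lam 0 * ∑ k, c k * Z 0 k with hμ0
  set μ1 : ℝ := lam 1 * ∑ k, c k * Z 1 k with hμ1
  set ν0 : ℝ := lam 0 * ∑ k, c' k * Z 0 k with hν0
  set ν1 : ℝ := lam 1 * ∑ k, c' k * Z 1 k with hν1
  have hP : ∀ i j, x 0 i * x 1 j = μ0 * (X 0 i * Y 0 j) + μ1 * (X 1 i * Y 1 j) := by
    intro i j
    have h1 := hcontract c i j
    have h2 := hcontract' c i j
    rw [hc1, hc2] at h1
    rw [h1] at h2
    rw [hμ0, hμ1]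
    linarith [h2]
  have hQ : ∀ i j, x 0 i * y 1 j + y 0 i * x 1 j
      = ν0 * (X 0 i * Y 0 j) + ν1 * (X 1 i * Y 1 j) := by
    intro i j
    have h1 := hcontract c' i j
    have h2 := hcontract' c' i j
    rw [hc'1, hc'2] at h1
    rw [h1] at h2
    rw [hν0, hν1]
    linarith [h2]
  -- independence of P and Q
  have hPQ : ∀ a b : ℝ,
      (∀ i j, a * (x 0 i * x 1 j) + b * (x 0 i * y 1 j + y 0 i * x 1 j) = 0) →
      a = 0 ∧ b = 0 := by
    intro a b hab
    obtain ⟨e, he1, he2⟩ := dual_exists (hli 0)  -- e·x0 = 1, e·y0 = 0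
    have key : ∀ j, a * x 1 j + b * y 1 j = 0 := by
      intro j
      have : ∀ i, e i * (a * (x 0 i * x 1 j) + b * (x 0 i * y 1 j + y 0 i * x 1 j))
          = (a * x 1 j + b * y 1 j) * (e i * x 0 i) + (b * x 1 j) * (e i * y 0 i) := by
        intro i; ring
      have hz : (∑ i, e i * (a * (x 0 i * x 1 j) + b * (x 0 i * y 1 j + y 0 i * x 1 j))) = 0 := by
        apply Finset.sum_eq_zero
        intro i _
        rw [hab i j, mul_zero]
      rw [Finset.sum_congr rfl fun i _ => this i, Finset.sum_add_distrib,
        ← Finset.mul_sum, ← Finset.mul_sum, he1, he2] at hz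
      linarith [hz]
    exact pair_zero (hli 1) key
  set d : ℝ := μ0 * ν1 - μ1 * ν0 with hd
  by_cases hd0 : d = 0
  · -- rows of coefficients are dependent, so P, Q are dependent: contradiction
    by_cases hν0z : ν0 = 0
    · by_cases hν1z : ν1 = 0
      · have := hPQ 0 1 (by
          intro i j
          rw [hQ i j, hν0z, hν1z]; ring)
        exact one_ne_zero this.2
      · have := hPQ ν1 (-μ1) (by
          intro i j
          have hp := hP i j
          have hq := hQ i j
          have hdd : μ0 * ν1 - μ1 * ν0 = 0 := by rw [← hd]; exact hd0
          linear_combination ν1 * hp - μ1 * hq + (X 0 i * Y 0 j) * hdd)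
        exact hν1z this.1
    · have := hPQ ν0 (-μ0) (by
        intro i j
        have hp := hP i j
        have hq := hQ i j
        have hdd : μ0 * ν1 - μ1 * ν0 = 0 := by rw [← hd]; exact hd0
        linear_combination ν0 * hp - μ0 * hq - (X 1 i * Y 1 j) * hdd)
      exact hν0z this.1
  · -- d ≠ 0 : solve for the rank-one matrices, each lies in the pencil
    have hR0 : ∀ i j, (d * X 0 i) * Y 0 j
        = ν1 * (x 0 i * x 1 j) + (-μ1) * (x 0 i * y 1 j + y 0 i * x 1 j) := by
      intro i j
      have hp := hP i j
      have hq := hQ i j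
      rw [hd]
      linear_combination (-ν1) * hp + μ1 * hq
    have hR1 : ∀ i j, (d * X 1 i) * Y 1 j
        = (-ν0) * (x 0 i * x 1 j) + μ0 * (x 0 i * y 1 j + y 0 i * x 1 j) := by
      intro i j
      have hp := hP i j
      have hq := hQ i j
      rw [hd]
      linear_combination ν0 * hp - μ0 * hq
    have hμ1z : -μ1 = 0 := pencil_rank_one (hli 0) (hli 1) hR0
    have hμ0z : μ0 = 0 := pencil_rank_one (hli 0) (hli 1) hR1
    apply hd0
    rw [hd]
    have : μ1 = 0 := by linarith
    rw [this, hμ0z]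
    ring

/-- padding a decomposition with a zero term -/
lemma mem_succ {m : ℕ} (A : Fin m → Fin m → Fin m → ℝ) (r : ℕ)
    (h : ∃ (lam : Fin r → ℝ) (X : Fin r → Fin m → ℝ)
      (Y : Fin r → Fin m → ℝ) (Z : Fin r → Fin m → ℝ),
      ∀ i j k, A i j k = ∑ α, lam α * (X α i * Y α j * Z α k)) :
    ∃ (lam : Fin (r+1) → ℝ) (X : Fin (r+1) → Fin m → ℝ)
      (Y : Fin (r+1) → Fin m → ℝ) (Z : Fin (r+1) → Fin m → ℝ),
      ∀ i j k, A i j k = ∑ α, lam α * (X α i * Y α j * Z α k) := by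
  obtain ⟨lam, X, Y, Z, h⟩ := h
  refine ⟨Fin.snoc lam 0, Fin.snoc X 0, Fin.snoc Y 0, Fin.snoc Z 0, ?_⟩
  intro i j k
  rw [Fin.sum_univ_castSucc]
  simp only [Fin.snoc_castSucc, Fin.snoc_last]
  rw [h i j k]
  ring_nf

theorem stmt_15 (m : ℕ) (x y : Fin 3 → Fin m → ℝ)
    (A : Fin m → Fin m → Fin m → ℝ)
    (hA : ∀ i j k, A i j k
      = x 0 i * x 1 j * y 2 k + x 0 i * y 1 j * x 2 k + y 0 i * x 1 j * x 2 k) :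
    ((∀ i, LinearIndependent ℝ ![x i, y i]) → tensorRank A = 3) ∧
    ((∃ i, ¬ LinearIndependent ℝ ![x i, y i]) → A ≠ 0 → tensorRank A ≤ 2) ∧
    (tensorRank A = 3 ↔ ∀ i, LinearIndependent ℝ ![x i, y i]) := by
  classical
  set S : Set ℕ := {r : ℕ | ∃ (lam : Fin r → ℝ) (X : Fin r → Fin m → ℝ)
    (Y : Fin r → Fin m → ℝ) (Z : Fin r → Fin m → ℝ),
    ∀ i j k, A i j k = ∑ α, lam α * (X α i * Y α j * Z α k)} with hS
  have hrank : tensorRank A = sInf S := rfl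
  -- 3 ∈ S
  have h3 : 3 ∈ S := by
    refine ⟨![1, 1, 1], ![x 0, x 0, y 0], ![x 1, y 1, x 1], ![y 2, x 2, x 2], ?_⟩
    intro i j k
    rw [hA]
    simp only [Fin.sum_univ_three, Matrix.cons_val_zero, Matrix.cons_val_one,
      Matrix.head_cons, Matrix.cons_val_two, Matrix.tail_cons, one_mul]
  -- if some pair is dependent then 2 ∈ S
  have h2mem : (∃ i, ¬ LinearIndependent ℝ ![x i, y i]) → 2 ∈ S := by
    rintro ⟨i, hi⟩
    have : ∃ a b : ℝ, ¬(a = 0 ∧ b = 0) ∧ (∀ k, a * x i k + b * y i k = 0) := by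
      rw [LinearIndependent.pair_iff] at hi
      push_neg at hi
      obtain ⟨a, b, hab, hne⟩ := hi
      refine ⟨a, b, ?_, ?_⟩
      · intro ⟨ha, hb⟩; exact hne ha hb
      · intro k
        have := congrFun hab k
        simpa [Pi.smul_apply, smul_eq_mul] using this
    obtain ⟨a, b, hab, heq⟩ := this
    -- either y i = c • x i or x i = 0
    have hcases : (∃ c : ℝ, ∀ k, y i k = c * x i k) ∨ (∀ k, x i k = 0) := by
      by_cases hb : b = 0
      · right
        intro k
        have := heq k
        rw [hb] at this
        have ha : a ≠ 0 := fun h0 => hab ⟨h0, hb⟩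
        have : a * x i k = 0 := by linarith
        exact (mul_eq_zero.mp this).resolve_left ha
      · left
        refine ⟨-a / b, fun k => ?_⟩
        have := heq k
        field_simp
        linarith
    have hi3 : i = 0 ∨ i = 1 ∨ i = 2 := by omega
    rcases hi3 with rfl | rfl | rfl <;> rcases hcases with ⟨cc, hy⟩ | hx0
    -- i = 0, y0 = cc • x0
    · refine ⟨![1, 1], ![x 0, x 0], ![x 1, fun j => y 1 j + cc * x 1 j], ![y 2, x 2], ?_⟩
      intro i j k
      rw [hA, hy i]
      simp only [Fin.sum_univ_two, Matrix.cons_val_zero, Matrix.cons_val_one,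
        Matrix.head_cons, Pi.zero_apply, one_mul]
      ring
    -- i = 0, x0 = 0
    · refine ⟨![1, 0], ![y 0, 0], ![x 1, 0], ![x 2, 0], ?_⟩
      intro i j k
      rw [hA, hx0 i]
      simp only [Fin.sum_univ_two, Matrix.cons_val_zero, Matrix.cons_val_one,
        Matrix.head_cons, Pi.zero_apply, one_mul]
      ring
    -- i = 1, y1 = cc • x1
    · refine ⟨![1, 1], ![x 0, y 0], ![x 1, x 1], ![fun k => y 2 k + cc * x 2 k, x 2], ?_⟩
      intro i j k
      rw [hA, hy j]
      simp only [Fin.sum_univ_two, Matrix.cons_val_zero, Matrix.cons_val_one,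
        Matrix.head_cons, Pi.zero_apply, one_mul]
      ring
    -- i = 1, x1 = 0
    · refine ⟨![1, 0], ![x 0, 0], ![y 1, 0], ![x 2, 0], ?_⟩
      intro i j k
      rw [hA, hx0 j]
      simp only [Fin.sum_univ_two, Matrix.cons_val_zero, Matrix.cons_val_one,
        Matrix.head_cons, Pi.zero_apply, one_mul]
      ring
    -- i = 2, y2 = cc • x2
    · refine ⟨![1, 1], ![x 0, y 0], ![fun j => y 1 j + cc * x 1 j, x 1], ![x 2, x 2], ?_⟩
      intro i j k
      rw [hA, hy k]
      simp only [Fin.sum_univ_two, Matrix.cons_val_zero, Matrix.cons_val_one,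
        Matrix.head_cons, Pi.zero_apply, one_mul]
      ring
    -- i = 2, x2 = 0
    · refine ⟨![1, 0], ![x 0, 0], ![x 1, 0], ![y 2, 0], ?_⟩
      intro i j k
      rw [hA, hx0 k]
      simp only [Fin.sum_univ_two, Matrix.cons_val_zero, Matrix.cons_val_one,
        Matrix.head_cons, Pi.zero_apply, one_mul]
      ring
  have hle2 : (∃ i, ¬ LinearIndependent ℝ ![x i, y i]) → tensorRank A ≤ 2 := by
    intro h
    rw [hrank]
    exact Nat.sInf_le (h2mem h)
  have heq3 : (∀ i, LinearIndependent ℝ ![x i, y i]) → tensorRank A = 3 := by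
    intro hli
    have hn2 : 2 ∉ S := no_two x y A hA hli
    have hne : S.Nonempty := ⟨3, h3⟩
    have hmem := Nat.sInf_mem hne
    have hle : sInf S ≤ 3 := Nat.sInf_le h3
    rw [hrank]
    interval_cases h : sInf S
    · exact absurd (mem_succ A 1 (mem_succ A 0 hmem)) hn2
    · exact absurd (mem_succ A 1 hmem) hn2
    · exact absurd hmem hn2
    · rfl
  refine ⟨heq3, fun h _ => hle2 h, ?_, heq3⟩
  intro h3'
  by_contra hdep
  push_neg at hdep
  obtain ⟨i, hi⟩ := hdep
  have := hle2 ⟨i, hi⟩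
  omega
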